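/- Let K ≥ 1, let I ⊆ ℝ be a compact interval with 0 ∈ I, and let f : I → ℝ be a map with f(I) ⊆ I that has K-bounded nonlinearity. Then the length of I satisfies |I| ≤ 2K², and consequently |f'(x)| ≤ 8K⁴ for all x ∈ I. -/

import Mathlib

open Set

/-- `f : [a,b] → ℝ` (with `0 ∈ [a,b]`) has `K`-bounded nonlinearity if there is a `C¹`
map `ψ` with `ψ(0) = 0`, `K⁻¹ ≤ ψ' ≤ K` on `[a,b]`, and `f(x) = f(0) + 2ψ(x)²`. -/
def KBoundedNonlinearity (K : ℝ) (f : ℝ → ℝ) (a b : ℝ) : Prop :=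
  ∃ ψ ψ' : ℝ → ℝ, ψ 0 = 0 ∧
    (∀ x ∈ Icc a b,
      HasDerivWithinAt ψ (ψ' x) (Icc a b) x ∧ K⁻¹ ≤ ψ' x ∧ ψ' x ≤ K) ∧
    (∀ x ∈ Icc a b, f x = f 0 + 2 * ψ x ^ 2)

/-- Lemma 7.1 (1d upper bound): if `f : I → I` has `K`-bounded nonlinearity on a compact
interval `I ∋ 0`, then `|I| ≤ 2K²`, and consequently `|f'| ≤ 8K⁴` on `I`. -/
theorem stmt5 (K a b : ℝ) (f : ℝ → ℝ) (hK : 1 ≤ K)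
    (ha : a ≤ 0) (hb : 0 ≤ b) (hab : a < b)
    (hmaps : MapsTo f (Icc a b) (Icc a b))
    (hnl : KBoundedNonlinearity K f a b) :
    b - a ≤ 2 * K ^ 2 ∧
      ∀ x ∈ Icc a b, ∀ d : ℝ, HasDerivWithinAt f d (Icc a b) x → |d| ≤ 8 * K ^ 4 := by
  obtain ⟨ψ, ψ', hψ0, hder, hf⟩ := hnl
  have hK0 : (0:ℝ) < K := lt_of_lt_of_le one_pos hK
  have h0mem : (0:ℝ) ∈ Icc a b := ⟨ha, hb⟩
  have hamem : a ∈ Icc a b := ⟨le_refl a, hab.le⟩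
  have hbmem : b ∈ Icc a b := ⟨hab.le, le_refl b⟩
  -- g = ψ - K⁻¹ • id is monotone on [a,b]
  have hcont : ContinuousOn ψ (Icc a b) :=
    fun x hx => (hder x hx).1.continuousWithinAt
  have hmono : MonotoneOn (fun x => ψ x - K⁻¹ * x) (Icc a b) := by
    apply monotoneOn_of_hasDerivWithinAt_nonneg (convex_Icc a b)
      (f' := fun x => ψ' x - K⁻¹)
      (hcont.sub (continuousOn_const.mul continuousOn_id))
    · intro x hx
      exact (((hder x (interior_subset hx)).1.mono interior_subset).sub
        ((hasDerivWithinAt_id x _).const_mul K⁻¹)).congr_deriv (by ring)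
    · intro x hx
      have := (hder x (interior_subset hx)).2.1
      linarith
  have hψb : K⁻¹ * b ≤ ψ b := by
    have := hmono h0mem hbmem hb
    simp [hψ0] at this
    linarith
  have hψa : ψ a ≤ K⁻¹ * a := by
    have := hmono hamem h0mem ha
    simp [hψ0] at this
    linarith
  -- 2 ψ(x)² ≤ b - a for x ∈ [a,b]
  have hsq : ∀ x ∈ Icc a b, 2 * ψ x ^ 2 ≤ b - a := by
    intro x hx
    have h1 := hmaps hx
    have h2 := hmaps h0mem
    have := hf x hx
    rw [this] at h1
    have := h1.2
    have := h2.1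
    linarith [h1.2, h2.1]
  have hKinv : (0:ℝ) < K⁻¹ := inv_pos.mpr hK0
  -- length bound
  have hb2 : 2 * (K⁻¹ * b) ^ 2 ≤ b - a := by
    refine le_trans ?_ (hsq b hbmem)
    have h1 : (0:ℝ) ≤ K⁻¹ * b := mul_nonneg hKinv.le hb
    nlinarith [hψb]
  have ha2 : 2 * (K⁻¹ * a) ^ 2 ≤ b - a := by
    refine le_trans ?_ (hsq a hamem)
    have h1 : K⁻¹ * a ≤ 0 := mul_nonpos_of_nonneg_of_nonpos hKinv.le ha
    nlinarith [hψa]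
  have h2b : 2 * b ^ 2 ≤ K ^ 2 * (b - a) := by
    have h := mul_le_mul_of_nonneg_left hb2 (sq_nonneg K)
    calc 2 * b ^ 2 = K ^ 2 * (2 * (K⁻¹ * b) ^ 2) := by field_simp
    _ ≤ K ^ 2 * (b - a) := h
  have h2a : 2 * a ^ 2 ≤ K ^ 2 * (b - a) := by
    have h := mul_le_mul_of_nonneg_left ha2 (sq_nonneg K)
    calc 2 * a ^ 2 = K ^ 2 * (2 * (K⁻¹ * a) ^ 2) := by field_simp
    _ ≤ K ^ 2 * (b - a) := h
  have hlen : b - a ≤ 2 * K ^ 2 := by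
    nlinarith [sq_nonneg (a + b), sub_pos.mpr hab]
  refine ⟨hlen, ?_⟩
  intro x hx d hd
  -- ψ is K-Lipschitz: |ψ x| ≤ K * |x|
  have hlip : |ψ x| ≤ K * |x| := by
    have := (convex_Icc a b).norm_image_sub_le_of_norm_hasDerivWithin_le
      (C := K) (f' := ψ') (fun y hy => (hder y hy).1)
      (fun y hy => by
        rw [Real.norm_eq_abs, abs_le]
        constructor
        · have := (hder y hy).2.1; linarith [hKinv.le]
        · exact (hder y hy).2.2) h0mem hx
    simpa [hψ0, Real.norm_eq_abs] using this
  have hxabs : |x| ≤ b - a := by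
    rcases abs_cases x with ⟨h, _⟩ | ⟨h, _⟩ <;> rw [h] <;> [linarith [hx.2]; linarith [hx.1]]
  -- the derivative of f within Icc is 4 ψ x ψ' x
  have hd2 : HasDerivWithinAt f (4 * ψ x * ψ' x) (Icc a b) x := by
    have h1 : HasDerivWithinAt (fun y => f 0 + 2 * ψ y ^ 2) (4 * ψ x * ψ' x) (Icc a b) x := by
      have : HasDerivWithinAt (fun y => f 0 + 2 * ψ y ^ 2) (2 * (((2:ℕ):ℝ) * ψ x ^ (2 - 1) * ψ' x)) (Icc a b) x :=
        (((hder x hx).1.pow 2).const_mul 2).const_add (f 0)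
      convert this using 1
      ring
    exact h1.congr (fun y hy => (hf y hy)) (hf x hx)
  have hdeq : d = 4 * ψ x * ψ' x := by
    have hu : UniqueDiffWithinAt ℝ (Icc a b) x := (uniqueDiffOn_Icc hab) x hx
    rw [← hd.derivWithin hu, ← hd2.derivWithin hu]
  rw [hdeq]
  have hψx : |ψ x| ≤ K * (2 * K ^ 2) := by
    calc |ψ x| ≤ K * |x| := hlip
    _ ≤ K * (2 * K ^ 2) := by
        apply mul_le_mul_of_nonneg_left (le_trans hxabs hlen) hK0.le
  have hψ'x : |ψ' x| ≤ K := by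
    rw [abs_le]
    exact ⟨by linarith [(hder x hx).2.1, hKinv.le], (hder x hx).2.2⟩
  calc |4 * ψ x * ψ' x| = 4 * |ψ x| * |ψ' x| := by
        rw [abs_mul, abs_mul]; norm_num
    _ ≤ 4 * (K * (2 * K ^ 2)) * K := by
        apply mul_le_mul (by nlinarith [abs_nonneg (ψ x)]) hψ'x (abs_nonneg _)
        positivity
    _ = 8 * K ^ 4 := by ring
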